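/- If S(F,y) is periodic with least period N and minimal polynomial m(X), then the constant coefficient of m is nonzero (m(0) = 1 in ZMod 2), m divides X^N − 1, and N equals the order of m, i.e. N is the least T ≥ 1 such that m divides X^T − 1. -/

import Mathlib

/-- A nonzero polynomial `p` over `ZMod 2` is an annihilating (characteristic) polynomial
of the sequence `S(F,y) = (F^[k] y)ₖ` if for every `k ≥ 0`,
`∑_{i=0}^{deg p} (coeff of Xⁱ in p) • F^[k+i] y = 0`. -/
def IsAnnihilating (n : ℕ) (F : (Fin n → ZMod 2) → (Fin n → ZMod 2))
    (y : Fin n → ZMod 2) (p : Polynomial (ZMod 2)) : Prop :=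
  p ≠ 0 ∧ ∀ k : ℕ, ∑ i ∈ Finset.range (p.natDegree + 1), p.coeff i • F^[k + i] y = 0

section Aux

variable {M : Type*} [AddCommGroup M] [Module (ZMod 2) M]

/-- `p` annihilates the sequence `s`. -/
def AnnS (s : ℕ → M) (p : Polynomial (ZMod 2)) : Prop :=
  ∀ k : ℕ, ∑ i ∈ Finset.range (p.natDegree + 1), p.coeff i • s (k + i) = 0

lemma sum_range_shift (f : ℕ → M) (m E : ℕ) (h : ∀ i < m, f i = 0) :
    ∑ i ∈ Finset.range (m + E), f i = ∑ i ∈ Finset.range E, f (m + i) := by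
  rw [Finset.range_eq_Ico,
    ← Finset.sum_Ico_consecutive _ (Nat.zero_le m) (Nat.le_add_right m E)]
  have h1 : ∑ i ∈ Finset.Ico 0 m, f i = 0 :=
    Finset.sum_eq_zero fun i hi => h i (Finset.mem_Ico.mp hi).2
  rw [h1, zero_add, Finset.sum_Ico_eq_sum_range]
  simp

lemma annS_sum {s : ℕ → M} {p : Polynomial (ZMod 2)} (h : AnnS s p) {D : ℕ}
    (hD : p.natDegree < D) (k : ℕ) :
    ∑ i ∈ Finset.range D, p.coeff i • s (k + i) = 0 := by
  rw [← Finset.sum_subset (Finset.range_subset_range.2 hD)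
    (fun x _ hx => by
      rw [Polynomial.coeff_eq_zero_of_natDegree_lt (by simpa using hx), zero_smul])]
  exact h k

lemma annS_of {s : ℕ → M} {p : Polynomial (ZMod 2)} {D : ℕ} (hD : p.natDegree < D)
    (h : ∀ k, ∑ i ∈ Finset.range D, p.coeff i • s (k + i) = 0) : AnnS s p := by
  intro k
  rw [Finset.sum_subset (Finset.range_subset_range.2 hD)
    (fun x _ hx => by
      rw [Polynomial.coeff_eq_zero_of_natDegree_lt (by simpa using hx), zero_smul])]
  exact h k

lemma annS_sub {s : ℕ → M} {p q : Polynomial (ZMod 2)} (hp : AnnS s p) (hq : AnnS s q) :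
    AnnS s (p - q) := by
  have hD : (p - q).natDegree < max p.natDegree q.natDegree + 1 :=
    Nat.lt_succ_of_le (Polynomial.natDegree_sub_le p q)
  refine annS_of hD fun k => ?_
  have h1 := annS_sum hp (D := max p.natDegree q.natDegree + 1)
    (Nat.lt_succ_of_le (le_max_left _ _)) k
  have h2 := annS_sum hq (D := max p.natDegree q.natDegree + 1)
    (Nat.lt_succ_of_le (le_max_right _ _)) k
  simp_rw [Polynomial.coeff_sub, sub_smul, Finset.sum_sub_distrib, h1, h2, sub_zero]

lemma annS_mul {s : ℕ → M} {p : Polynomial (ZMod 2)} (hp : AnnS s p)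
    (q : Polynomial (ZMod 2)) : AnnS s (p * q) := by
  induction q using Polynomial.induction_on' with
  | add f g hf hg =>
    have := annS_sub hf (by simpa [neg_neg] using (annS_sub (annS_sub hf hf) hg))
    simpa [mul_add, sub_sub_cancel, sub_neg_eq_add] using this
  | monomial m a =>
    have hD : (p * Polynomial.monomial m a).natDegree < m + (p.natDegree + 1) := by
      have := Polynomial.natDegree_mul_le (p := p) (q := Polynomial.monomial m a)
      have h2 := Polynomial.natDegree_monomial_le (a := a) (m := m)
      omega
    refine annS_of hD fun k => ?_
    have hcoeff : ∀ i, (p * Polynomial.monomial m a).coeff i =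
        if m ≤ i then p.coeff (i - m) * a else 0 := by
      intro i
      rw [← Polynomial.C_mul_X_pow_eq_monomial, ← mul_assoc, Polynomial.coeff_mul_X_pow']
      split <;> simp [Polynomial.coeff_mul_C]
    rw [sum_range_shift _ m (p.natDegree + 1)
      (fun i hi => by rw [hcoeff i, if_neg (by omega), zero_smul])]
    have : ∀ i, (p * Polynomial.monomial m a).coeff (m + i) • s (k + (m + i)) =
        a • (p.coeff i • s ((k + m) + i)) := by
      intro i
      rw [hcoeff (m + i), if_pos (Nat.le_add_right m i), Nat.add_sub_cancel_left,
        mul_comm, mul_smul, show k + (m + i) = k + m + i by omega]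
    simp_rw [this, ← Finset.smul_sum, hp (k + m), smul_zero]

lemma sum_XpowSub (s : ℕ → M) (k N : ℕ) (hN : 1 ≤ N) :
    ∑ i ∈ Finset.range (N + 1), ((Polynomial.X ^ N - 1 : Polynomial (ZMod 2)).coeff i) • s (k + i)
      = s (k + N) - s k := by
  have hc : ∀ i, (Polynomial.X ^ N - 1 : Polynomial (ZMod 2)).coeff i =
      (if N = i then (1 : ZMod 2) else 0) - (if 0 = i then 1 else 0) := by
    intro i
    simp [Polynomial.coeff_sub, Polynomial.coeff_X_pow, Polynomial.coeff_one, eq_comm]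
  simp_rw [hc, sub_smul, Finset.sum_sub_distrib, ite_smul, zero_smul]
  rw [Finset.sum_ite_eq, Finset.sum_ite_eq]
  simp [Nat.lt_succ_iff, hN]

lemma natDegree_XpowSub (N : ℕ) (hN : 1 ≤ N) :
    (Polynomial.X ^ N - 1 : Polynomial (ZMod 2)).natDegree = N := by
  rw [show (1 : Polynomial (ZMod 2)) = Polynomial.C 1 by simp]
  exact Polynomial.natDegree_X_pow_sub_C

lemma annS_XpowSub {s : ℕ → M} {N : ℕ} (hN : 1 ≤ N) (h : ∀ k, s (k + N) = s k) :
    AnnS s (Polynomial.X ^ N - 1) := by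
  refine annS_of (D := N + 1) (by rw [natDegree_XpowSub N hN]; omega) fun k => ?_
  rw [sum_XpowSub s k N hN, h, sub_self]

lemma period_of_annS_XpowSub {s : ℕ → M} {N : ℕ} (hN : 1 ≤ N)
    (h : AnnS s (Polynomial.X ^ N - 1)) : ∀ k, s (k + N) = s k := by
  intro k
  have := annS_sum h (D := N + 1) (by rw [natDegree_XpowSub N hN]; omega) k
  rw [sum_XpowSub s k N hN, sub_eq_zero] at this
  exact this

end Aux

/-- If `S(F,y)` is periodic with least period `N` and minimal polynomial
`μ`, then the constant coefficient of `μ` is nonzero (`μ(0) = 1` in `ZMod 2`), `μ` divides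
`X^N − 1`, and `N` is the order of `μ`: the least `T ≥ 1` with `μ ∣ X^T − 1`. -/
theorem minimal_polynomial_order_eq_least_period (n : ℕ) (hn : 0 < n)
    (F : (Fin n → ZMod 2) → (Fin n → ZMod 2)) (y : Fin n → ZMod 2)
    (N : ℕ) (hN : 1 ≤ N) (hper : ∀ k : ℕ, F^[k + N] y = F^[k] y)
    (hleast : ∀ N' : ℕ, 1 ≤ N' → (∀ k : ℕ, F^[k + N'] y = F^[k] y) → N ≤ N')
    (μ : Polynomial (ZMod 2)) (hmonic : μ.Monic) (hann : IsAnnihilating n F y μ)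
    (hmin : ∀ p : Polynomial (ZMod 2), IsAnnihilating n F y p → μ.natDegree ≤ p.natDegree) :
    μ.coeff 0 = 1 ∧
    μ ∣ (Polynomial.X ^ N - 1 : Polynomial (ZMod 2)) ∧
    (∀ T : ℕ, 1 ≤ T → μ ∣ (Polynomial.X ^ T - 1 : Polynomial (ZMod 2)) → N ≤ T) := by
  set s : ℕ → (Fin n → ZMod 2) := fun k => F^[k] y with hs
  have hannμ : AnnS s μ := hann.2
  have hμ0 : μ ≠ 0 := hann.1
  -- Part 1 : coeff 0 = 1
  have part1 : μ.coeff 0 = 1 := by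
    by_contra hc
    have h0 : μ.coeff 0 = 0 := by
      have h2 : ∀ a : ZMod 2, a = 0 ∨ a = 1 := by decide
      rcases h2 (μ.coeff 0) with h | h
      · exact h
      · exact absurd h hc
    obtain ⟨q, hq⟩ := Polynomial.X_dvd_iff.mpr h0
    have hq0 : q ≠ 0 := by rintro rfl; simp at hq; exact hμ0 hq
    have hdeg : μ.natDegree = q.natDegree + 1 := by
      rw [hq, Polynomial.natDegree_mul Polynomial.X_ne_zero hq0, Polynomial.natDegree_X]
      omega
    -- q annihilates the shifted sequence
    have key : ∀ k, ∑ j ∈ Finset.range (q.natDegree + 1), q.coeff j • s (k + 1 + j) = 0 := by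
      intro k
      have h1 := hannμ k
      rw [hdeg, Finset.sum_range_succ'] at h1
      have h2 : (μ.coeff 0) • s (k + 0) = 0 := by rw [h0, zero_smul]
      rw [h2, add_zero] at h1
      have h3 : ∀ i, μ.coeff (i + 1) • s (k + (i + 1)) = q.coeff i • s (k + 1 + i) := by
        intro i
        rw [hq, Polynomial.coeff_X_mul, show k + (i + 1) = k + 1 + i by omega]
      simp_rw [h3] at h1
      exact h1
    have hannq : AnnS s q := by
      intro k
      calc ∑ j ∈ Finset.range (q.natDegree + 1), q.coeff j • s (k + j)
          = ∑ j ∈ Finset.range (q.natDegree + 1), q.coeff j • s ((k + N - 1) + 1 + j) := by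
            refine Finset.sum_congr rfl fun j _ => ?_
            rw [show (k + N - 1) + 1 + j = (k + j) + N by omega]
            have := hper (k + j)
            rw [hs]
            simp only []
            rw [this]
        _ = 0 := key (k + N - 1)
    have := hmin q ⟨hq0, hannq⟩
    omega
  -- Part 2 : μ ∣ X^N - 1
  have part2 : μ ∣ (Polynomial.X ^ N - 1 : Polynomial (ZMod 2)) := by
    rw [← Polynomial.modByMonic_eq_zero_iff_dvd hmonic]
    by_contra hr
    set r := (Polynomial.X ^ N - 1 : Polynomial (ZMod 2)) %ₘ μ with hrdef
    have hdecomp := Polynomial.modByMonic_add_div (Polynomial.X ^ N - 1 : Polynomial (ZMod 2)) μ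
    have hr_eq : r = (Polynomial.X ^ N - 1) - μ * ((Polynomial.X ^ N - 1) /ₘ μ) := by
      rw [eq_sub_iff_add_eq]; exact hdecomp
    have hannr : AnnS s r := by
      rw [hr_eq]
      exact annS_sub (annS_XpowSub hN (fun k => hper k)) (annS_mul hannμ _)
    have hle := hmin r ⟨hr, hannr⟩
    have hlt : r.natDegree < μ.natDegree :=
      Polynomial.natDegree_lt_natDegree hr (Polynomial.degree_modByMonic_lt _ hmonic)
    omega
  -- Part 3
  refine ⟨part1, part2, fun T hT hdvd => ?_⟩
  obtain ⟨q, hq⟩ := hdvd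
  have hannT : AnnS s (Polynomial.X ^ T - 1) := by rw [hq]; exact annS_mul hannμ q
  exact hleast T hT (period_of_annS_XpowSub hT hannT)
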